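/- arXiv:2509.20404 — 6 statements merged into one kernel-verified Lean document; each statement's English description precedes it below -/
import Mathlib

section
/- For every $n \in \mathbb{N}$ and every $t \in \mathbb{N}_+$, any bipartite graph with $n$ vertices on each side containing no copy of $K_{t,t}$ (respecting the bipartition) has at most $(t-1)^{1/t} \cdot n^{2-1/t} + (t-1) \cdot n$ edges. -/
/-- Kővári–Sós–Turán: a bipartite graph with `n` vertices on each side and no copy of
`K_{t,t}` has at most `(t-1)^(1/t) * n^(2-1/t) + (t-1) * n` edges. -/
theorem stmt1 (n t : ℕ) (ht : 1 ≤ t) (E : Finset (Fin n × Fin n))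
    (hfree : ¬ ∃ (A B : Finset (Fin n)), A.card = t ∧ B.card = t ∧
      ∀ a ∈ A, ∀ b ∈ B, (a, b) ∈ E) :
    (E.card : ℝ) ≤ ((t : ℝ) - 1) ^ ((1 : ℝ) / t) * (n : ℝ) ^ (2 - (1 : ℝ) / t)
      + ((t : ℝ) - 1) * n := by
  classical
  have ht1 : (0:ℝ) ≤ (t:ℝ) - 1 := by
    have : (1:ℝ) ≤ t := by exact_mod_cast ht
    linarith
  have ht0 : (t:ℝ) ≠ 0 := by positivity
  -- neighborhoods
  set N : Fin n → Finset (Fin n) := fun b => Finset.univ.filter (fun a => (a, b) ∈ E) with hN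
  -- Step A: edge count as sum of degrees
  have hEcard : E.card = ∑ b : Fin n, (N b).card := by
    rw [← Finset.filter_univ_mem E, Finset.card_filter, ← Finset.univ_product_univ,
      Finset.sum_product_right]
    simp_rw [hN, Finset.card_filter]
  -- Step B: each t-set has at most t-1 common neighbors
  have hB : ∀ S : Finset (Fin n), S.card = t →
      (Finset.univ.filter (fun b => S ⊆ N b)).card ≤ t - 1 := by
    intro S hS
    by_contra h
    push_neg at h
    have ht' : t ≤ (Finset.univ.filter (fun b => S ⊆ N b)).card := by omega
    obtain ⟨B, hBsub, hBcard⟩ := Finset.exists_subset_card_eq ht'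
    refine hfree ⟨S, B, hS, hBcard, fun a ha b hb => ?_⟩
    have hb' := hBsub hb
    rw [Finset.mem_filter] at hb'
    have := hb'.2 ha
    simp only [hN, Finset.mem_filter] at this
    exact this.2
  -- Step C: double counting
  have hC : ∑ b : Fin n, ((N b).card.choose t) ≤ (t - 1) * n.choose t := by
    have key : ∀ b, (N b).card.choose t
        = ((Finset.univ.powersetCard t).filter (fun S => S ⊆ N b)).card := by
      intro b
      rw [← Finset.card_powersetCard]
      congr 1
      ext S
      simp only [Finset.mem_powersetCard, Finset.mem_filter, Finset.subset_univ, true_and]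
      tauto
    calc ∑ b : Fin n, (N b).card.choose t
        = ∑ b : Fin n, ∑ S ∈ Finset.univ.powersetCard t, if S ⊆ N b then 1 else 0 := by
          simp_rw [key, Finset.card_filter]
      _ = ∑ S ∈ Finset.univ.powersetCard t, ∑ b : Fin n, if S ⊆ N b then 1 else 0 :=
          Finset.sum_comm
      _ = ∑ S ∈ Finset.univ.powersetCard t, (Finset.univ.filter (fun b => S ⊆ N b)).card := by
          simp_rw [Finset.card_filter]
      _ ≤ ∑ _S ∈ Finset.univ.powersetCard t, (t-1) :=
          Finset.sum_le_sum (fun S hS => hB S (Finset.mem_powersetCard.mp hS).2)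
      _ = (Finset.univ.powersetCard t).card * (t-1) := by
          rw [Finset.sum_const, smul_eq_mul]
      _ = (t-1) * n.choose t := by
          rw [Finset.card_powersetCard, Finset.card_univ, Fintype.card_fin, mul_comm]
  -- Step D: the key nat inequality
  have hD : ∑ b : Fin n, ((N b).card - (t-1))^t ≤ (t-1) * n^t := by
    calc ∑ b : Fin n, ((N b).card - (t-1))^t
        ≤ ∑ b : Fin n, ((N b).card).descFactorial t := by
          refine Finset.sum_le_sum (fun b _ => ?_)
          have h1 : (N b).card - (t-1) = (N b).card + 1 - t := by omega
          rw [h1]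
          exact Nat.pow_sub_le_descFactorial _ _
      _ = ∑ b : Fin n, Nat.factorial t * ((N b).card.choose t) := by
          simp_rw [Nat.descFactorial_eq_factorial_mul_choose]
      _ = Nat.factorial t * ∑ b : Fin n, (N b).card.choose t := by rw [Finset.mul_sum]
      _ ≤ Nat.factorial t * ((t-1) * n.choose t) := Nat.mul_le_mul_left _ hC
      _ = (t-1) * (Nat.factorial t * n.choose t) := by ring
      _ = (t-1) * n.descFactorial t := by rw [Nat.descFactorial_eq_factorial_mul_choose]
      _ ≤ (t-1) * n^t := Nat.mul_le_mul_left _ (Nat.descFactorial_le_pow n t)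
  -- Step E: nat bound on edge count
  set s : ℕ := ∑ b : Fin n, ((N b).card - (t-1)) with hs
  have hE2 : E.card ≤ s + (t-1) * n := by
    rw [hEcard]
    calc ∑ b : Fin n, (N b).card
        ≤ ∑ b : Fin n, (((N b).card - (t-1)) + (t-1)) :=
          Finset.sum_le_sum (fun b _ => le_tsub_add)
      _ = s + n * (t-1) := by
          rw [Finset.sum_add_distrib, Finset.sum_const, Finset.card_univ, Fintype.card_fin,
            smul_eq_mul]
      _ = s + (t-1) * n := by ring
  -- handle n = 0
  rcases Nat.eq_zero_or_pos n with rfl | hn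
  · have hEempty : E = ∅ := Finset.eq_empty_of_isEmpty E
    rw [hEempty]
    simp only [Finset.card_empty, Nat.cast_zero, Nat.cast_ofNat, mul_zero, add_zero]
    exact mul_nonneg (Real.rpow_nonneg ht1 _) (Real.rpow_nonneg (by norm_num) _)
  -- power mean
  have hpow : (s:ℝ)^t ≤ ((t:ℝ) - 1) * (n:ℝ)^(2*t-1) := by
    have pm := pow_sum_div_card_le_sum_pow (s := (Finset.univ : Finset (Fin n)))
      (f := fun b : Fin n => (((N b).card - (t-1) : ℕ) : ℝ)) (fun i _ => Nat.cast_nonneg _) (t-1)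
    rw [Nat.sub_add_cancel ht, Finset.card_univ, Fintype.card_fin,
      div_le_iff₀ (by positivity)] at pm
    have hcast1 : (∑ b : Fin n, (((N b).card - (t-1) : ℕ) : ℝ)) = (s:ℝ) := by
      rw [hs]; push_cast; ring
    rw [hcast1] at pm
    have hcast2 : (∑ b : Fin n, (((N b).card - (t-1) : ℕ) : ℝ)^t)
        ≤ ((t:ℝ) - 1) * (n:ℝ)^t := by
      have := hD
      have hc : ((∑ b : Fin n, ((N b).card - (t-1))^t : ℕ) : ℝ)
          ≤ (((t-1) * n^t : ℕ) : ℝ) := by exact_mod_cast hD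
      push_cast [Nat.cast_sub ht] at hc
      convert hc using 2
    calc (s:ℝ)^t ≤ (∑ b : Fin n, (((N b).card - (t-1) : ℕ) : ℝ)^t) * (n:ℝ)^(t-1) := pm
      _ ≤ (((t:ℝ) - 1) * (n:ℝ)^t) * (n:ℝ)^(t-1) := by
          apply mul_le_mul_of_nonneg_right hcast2 (by positivity)
      _ = ((t:ℝ) - 1) * (n:ℝ)^(2*t-1) := by
          rw [mul_assoc, ← pow_add]
          congr 2
          omega
  -- take t-th roots
  have hsle : (s:ℝ) ≤ ((t:ℝ) - 1) ^ ((1:ℝ)/t) * (n:ℝ) ^ (2 - (1:ℝ)/t) := by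
    have h0s : (0:ℝ) ≤ (s:ℝ) := Nat.cast_nonneg _
    have step := Real.rpow_le_rpow (by positivity) hpow
      (by positivity : (0:ℝ) ≤ 1/(t:ℝ))
    have lhs_eq : (((s:ℝ)^t) : ℝ) ^ ((1:ℝ)/t) = (s:ℝ) := by
      rw [← Real.rpow_natCast (s:ℝ) t, ← Real.rpow_mul h0s,
        mul_one_div_cancel ht0, Real.rpow_one]
    have rhs_eq : (((t:ℝ) - 1) * (n:ℝ)^(2*t-1)) ^ ((1:ℝ)/t)
        = ((t:ℝ) - 1) ^ ((1:ℝ)/t) * (n:ℝ) ^ (2 - (1:ℝ)/t) := by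
      rw [Real.mul_rpow ht1 (by positivity), ← Real.rpow_natCast (n:ℝ) (2*t-1),
        ← Real.rpow_mul (Nat.cast_nonneg n)]
      congr 1
      have h2t : ((2*t-1 : ℕ) : ℝ) = 2*(t:ℝ) - 1 := by
        push_cast [Nat.cast_sub (by omega : 1 ≤ 2*t)]; ring
      rw [h2t]
      field_simp
    rw [lhs_eq, rhs_eq] at step
    exact step
  -- finish
  have hfinal : (E.card : ℝ) ≤ (s:ℝ) + ((t:ℝ) - 1) * n := by
    have : ((E.card : ℕ) : ℝ) ≤ ((s + (t-1) * n : ℕ) : ℝ) := by exact_mod_cast hE2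
    push_cast [Nat.cast_sub ht] at this
    linarith
  linarith
end

section
/- If $W$ is a finite set, $A_1, \ldots, A_n \subseteq W$, and $t \in \{1, \ldots, n\}$, then there exists a $t$-element subset $I \subseteq \{1, \ldots, n\}$ such that $\left|\bigcap_{i \in I} A_i\right| \ge \frac{1}{(n)_t \cdot |W|^{t-1}} \left(\sum_{i=1}^n |A_i|\right)^t - \left(\frac{n^t}{(n)_t} - 1\right) \max_{i \in [n]} |A_i|$, where $(n)_t = n(n-1)\cdots(n-t+1)$ is the falling factorial. -/
/-- Erdős' intersection lemma: among `A₁, …, Aₙ ⊆ W` there are `t` sets with large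
common intersection. -/
theorem stmt2 {W : Type*} [Fintype W] [DecidableEq W] (n t : ℕ)
    (ht : 1 ≤ t) (htn : t ≤ n) (A : Fin n → Finset W) :
    ∃ I : Finset (Fin n), I.card = t ∧
      (∑ i, ((A i).card : ℝ)) ^ t / ((n.descFactorial t : ℝ) * (Fintype.card W : ℝ) ^ (t - 1))
        - ((n : ℝ) ^ t / (n.descFactorial t : ℝ) - 1) *
          ((Finset.univ.sup fun i => (A i).card : ℕ) : ℝ)
      ≤ ((I.inf A).card : ℝ) := by
  classical
  set d : W → ℕ := fun w => (Finset.univ.filter fun i => w ∈ A i).card with hd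
  set M : ℕ := Finset.univ.sup fun i => (A i).card with hM
  -- choose maximizing I
  have hPne : (Finset.powersetCard t (Finset.univ : Finset (Fin n))).Nonempty := by
    rw [← Finset.card_pos, Finset.card_powersetCard, Finset.card_univ, Fintype.card_fin]
    exact Nat.choose_pos htn
  obtain ⟨I, hIP, hImax⟩ := Finset.exists_max_image _ (fun J => (J.inf A).card) hPne
  rw [Finset.mem_powersetCard_univ] at hIP
  refine ⟨I, hIP, ?_⟩
  set C : ℕ := (I.inf A).card with hC
  by_cases hW : Fintype.card W = 0
  · have hA : ∀ i, (A i).card = 0 := fun i =>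
      Nat.le_zero.mp (le_trans (Finset.card_le_univ _) (by simp [Finset.card_univ, hW]))
    have hM0 : M = 0 := Nat.le_zero.mp (Finset.sup_le fun i _ => (hA i).le)
    simp only [hA, Nat.cast_zero, Finset.sum_const_zero, ← hM, hM0, mul_zero, sub_zero,
      zero_pow (by omega : t ≠ 0), zero_div]
    positivity
  -- sum of degrees
  have K1 : ∑ w : W, d w = ∑ i, (A i).card := by
    simp only [hd, Finset.card_filter]
    rw [Finset.sum_comm]
    refine Finset.sum_congr rfl fun i _ => ?_
    rw [← Finset.card_filter, Finset.filter_mem_eq_inter, Finset.univ_inter]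
  -- tuple double counting
  have K2 : ∑ f : Fin t → Fin n, ((Finset.univ.inf fun j => A (f j)).card)
      = ∑ w : W, (d w) ^ t := by
    have h1 : ∀ f : Fin t → Fin n,
        (Finset.univ.inf fun j => A (f j))
          = Finset.univ.filter (fun w => ∀ j, w ∈ A (f j)) := by
      intro f; ext w; simp [Finset.mem_inf]
    simp only [h1, Finset.card_filter]
    rw [Finset.sum_comm]
    refine Finset.sum_congr rfl fun w _ => ?_
    rw [← Finset.card_filter]
    have h2 : Finset.univ.filter (fun f : Fin t → Fin n => ∀ j, w ∈ A (f j))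
        = Fintype.piFinset (fun _ : Fin t => Finset.univ.filter fun i => w ∈ A i) := by
      ext f; simp [Fintype.mem_piFinset]
    rw [h2, Fintype.card_piFinset]
    simp [hd]
  -- number of injective tuples
  have K3 : (Finset.univ.filter fun f : Fin t → Fin n => Function.Injective f).card
      = n.descFactorial t := by
    rw [← Fintype.card_subtype,
      Fintype.card_congr (Equiv.subtypeInjectiveEquivEmbedding (Fin t) (Fin n)),
      Fintype.card_embedding_eq, Fintype.card_fin, Fintype.card_fin]
  -- bound on each injective tuple
  have hinj : ∀ f : Fin t → Fin n, Function.Injective f →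
      ((Finset.univ.inf fun j => A (f j)).card) ≤ C := by
    intro f hf
    have h3 : (Finset.univ.inf fun j => A (f j)) = (Finset.univ.image f).inf A := by
      rw [Finset.inf_image]; rfl
    rw [h3]
    refine hImax _ ?_
    rw [Finset.mem_powersetCard_univ, Finset.card_image_of_injective _ hf,
      Finset.card_univ, Fintype.card_fin]
  -- bound on any tuple
  have hany : ∀ f : Fin t → Fin n, ((Finset.univ.inf fun j => A (f j)).card) ≤ M := by
    intro f
    refine le_trans (Finset.card_le_card (Finset.inf_le (Finset.mem_univ ⟨0, ht⟩))) ?_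
    exact Finset.le_sup (f := fun i => (A i).card) (Finset.mem_univ (f ⟨0, ht⟩))
  -- split the sum
  have key0 : ∑ w : W, (d w) ^ t
      ≤ n.descFactorial t * C + (n ^ t - n.descFactorial t) * M := by
    rw [← K2, ← Finset.sum_filter_add_sum_filter_not Finset.univ
      (fun f : Fin t → Fin n => Function.Injective f)]
    have b1 : ∑ f ∈ Finset.univ.filter (fun f : Fin t → Fin n => Function.Injective f),
        ((Finset.univ.inf fun j => A (f j)).card) ≤ n.descFactorial t * C := by
      calc _ ≤ ∑ _f ∈ Finset.univ.filter (fun f : Fin t → Fin n => Function.Injective f), C :=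
          Finset.sum_le_sum fun f hf => hinj f (Finset.mem_filter.mp hf).2
        _ = n.descFactorial t * C := by rw [Finset.sum_const, K3, smul_eq_mul]
    have hcard : (Finset.univ.filter
        (fun f : Fin t → Fin n => ¬ Function.Injective f)).card
          = n ^ t - n.descFactorial t := by
      have := Finset.card_filter_add_card_filter_not
        (s := (Finset.univ : Finset (Fin t → Fin n)))
        (p := fun f => Function.Injective f)
      rw [Finset.card_univ, Fintype.card_fun, Fintype.card_fin, Fintype.card_fin, K3] at this
      exact Nat.eq_sub_of_add_eq' this
    have b2 : ∑ f ∈ Finset.univ.filter (fun f : Fin t → Fin n => ¬ Function.Injective f),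
        ((Finset.univ.inf fun j => A (f j)).card) ≤ (n ^ t - n.descFactorial t) * M := by
      calc _ ≤ ∑ _f ∈ Finset.univ.filter
            (fun f : Fin t → Fin n => ¬ Function.Injective f), M :=
          Finset.sum_le_sum fun f _ => hany f
        _ = (n ^ t - n.descFactorial t) * M := by rw [Finset.sum_const, hcard, smul_eq_mul]
    exact Nat.add_le_add b1 b2
  -- Jensen
  have J : (∑ i, ((A i).card : ℝ)) ^ t / (Fintype.card W : ℝ) ^ (t - 1)
      ≤ ∑ w : W, (d w : ℝ) ^ t := by
    obtain ⟨t', rfl⟩ : ∃ t', t = t' + 1 := ⟨t - 1, (Nat.succ_pred_eq_of_pos ht).symm⟩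
    have hS : (∑ i, ((A i).card : ℝ)) = ∑ w : W, (d w : ℝ) := by
      rw [← Nat.cast_sum, ← Nat.cast_sum, K1]
    rw [hS]
    have := pow_sum_div_card_le_sum_pow (s := Finset.univ)
      (f := fun w : W => (d w : ℝ)) (fun _ _ => Nat.cast_nonneg _) t'
    simpa [Finset.card_univ] using this
  -- cast key0 to ℝ
  have key : (∑ i, ((A i).card : ℝ)) ^ t / (Fintype.card W : ℝ) ^ (t - 1)
      ≤ (n.descFactorial t : ℝ) * C + ((n : ℝ) ^ t - (n.descFactorial t : ℝ)) * M := by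
    refine le_trans J ?_
    calc ∑ w : W, (d w : ℝ) ^ t = ((∑ w : W, (d w) ^ t : ℕ) : ℝ) := by push_cast; rfl
      _ ≤ ((n.descFactorial t * C + (n ^ t - n.descFactorial t) * M : ℕ) : ℝ) :=
          Nat.cast_le.mpr key0
      _ = (n.descFactorial t : ℝ) * C + ((n : ℝ) ^ t - (n.descFactorial t : ℝ)) * M := by
          push_cast [Nat.cast_sub (Nat.descFactorial_le_pow n t)]; ring
  -- final arithmetic
  have hD : (0 : ℝ) < (n.descFactorial t : ℝ) := by
    have : n.descFactorial t ≠ 0 := by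
      rw [Ne, Nat.descFactorial_eq_zero_iff_lt]; exact Nat.not_lt.mpr htn
    positivity
  have hc : (0 : ℝ) < (Fintype.card W : ℝ) ^ (t - 1) := by
    have : (0 : ℝ) < (Fintype.card W : ℝ) := by
      exact_mod_cast Nat.pos_of_ne_zero hW
    positivity
  have heq : (∑ i, ((A i).card : ℝ)) ^ t
        / ((n.descFactorial t : ℝ) * (Fintype.card W : ℝ) ^ (t - 1))
      - ((n : ℝ) ^ t / (n.descFactorial t : ℝ) - 1) * (M : ℝ)
      = ((∑ i, ((A i).card : ℝ)) ^ t / (Fintype.card W : ℝ) ^ (t - 1)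
        - ((n : ℝ) ^ t - (n.descFactorial t : ℝ)) * M) / (n.descFactorial t : ℝ) := by
    field_simp
  rw [heq, div_le_iff₀ hD]
  nlinarith [key]
end

section
/- For every $n, k, t \in \mathbb{N}_+$ with $k \ge 2$ and $t \le n$, the partite extremal number satisfies $\mathrm{ex}_{k\text{-part}}(n, K^{(k)}_{t,\ldots,t}) \le \left(\mathrm{ex}_{(k-1)\text{-part}}(n, K^{(k-1)}_{t,\ldots,t}) + t(t-1) n^{k-2}\right)^{1/t} \cdot n^{k-(k-1)/t}$. -/
open Finset

/-- A `k`-partite `k`-hypergraph on `n` vertices per part (edges are transversals)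
contains a copy of the complete `k`-partite hypergraph with `t` vertices per part. -/
def HasGridCopy (n k t : ℕ) (E : Finset (Fin k → Fin n)) : Prop :=
  ∃ α : Fin k → Fin t → Fin n, (∀ i, Function.Injective (α i)) ∧
    ∀ β : Fin k → Fin t, (fun i => α i (β i)) ∈ E

/-- The partite extremal number `ex_{k-part}(n, K^{(k)}_{t,…,t})`. -/
noncomputable def exPartite (n k t : ℕ) : ℕ :=
  sSup {c | ∃ E : Finset (Fin k → Fin n), ¬ HasGridCopy n k t E ∧ c = E.card}

lemma exPartite_bddAbove (n k t : ℕ) :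
    BddAbove {c | ∃ E : Finset (Fin k → Fin n), ¬ HasGridCopy n k t E ∧ c = E.card} := by
  refine ⟨Fintype.card (Fin k → Fin n), ?_⟩
  rintro c ⟨E, -, rfl⟩
  exact Finset.card_le_univ E

lemma card_le_exPartite {n k t : ℕ} {E : Finset (Fin k → Fin n)}
    (hE : ¬ HasGridCopy n k t E) : E.card ≤ exPartite n k t :=
  le_csSup (exPartite_bddAbove n k t) ⟨E, hE, rfl⟩

lemma exPartite_spec (n k t : ℕ) (ht : 1 ≤ t) :
    ∃ E : Finset (Fin k → Fin n), ¬ HasGridCopy n k t E ∧ exPartite n k t = E.card := by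
  have h0 : ¬ HasGridCopy n k t (∅ : Finset (Fin k → Fin n)) := by
    rintro ⟨α, -, hβ⟩
    exact absurd (hβ fun _ => ⟨0, ht⟩) (Finset.notMem_empty _)
  obtain ⟨E, hE, hcard⟩ := Nat.sSup_mem
    (s := {c | ∃ E : Finset (Fin k → Fin n), ¬ HasGridCopy n k t E ∧ c = E.card})
    ⟨0, ∅, h0, by simp⟩ (exPartite_bddAbove n k t)
  exact ⟨E, hE, hcard⟩

lemma pow_le_desc (d : ℕ) : ∀ t : ℕ, d ^ (t + 1) ≤ d.descFactorial (t + 1) + t * (t + 1) * d ^ t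
  | 0 => by simp [Nat.descFactorial]
  | (t + 1) => by
    have ih := pow_le_desc d t
    have hdesc : d.descFactorial (t + 2) = (d - (t + 1)) * d.descFactorial (t + 1) :=
      Nat.descFactorial_succ d (t + 1)
    have h1 : d * d.descFactorial (t + 1) ≤
        d.descFactorial (t + 2) + (t + 1) * d.descFactorial (t + 1) := by
      have hd : d ≤ (d - (t + 1)) + (t + 1) := by omega
      calc d * d.descFactorial (t + 1) ≤ ((d - (t + 1)) + (t + 1)) * d.descFactorial (t + 1) :=
            Nat.mul_le_mul_right _ hd
        _ = d.descFactorial (t + 2) + (t + 1) * d.descFactorial (t + 1) := by rw [hdesc]; ring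
    calc d ^ (t + 2) = d * d ^ (t + 1) := by ring
      _ ≤ d * (d.descFactorial (t + 1) + t * (t + 1) * d ^ t) := Nat.mul_le_mul_left _ ih
      _ = d * d.descFactorial (t + 1) + t * (t + 1) * d ^ (t + 1) := by ring
      _ ≤ (d.descFactorial (t + 2) + (t + 1) * d.descFactorial (t + 1))
            + t * (t + 1) * d ^ (t + 1) := by gcongr
      _ ≤ (d.descFactorial (t + 2) + (t + 1) * d ^ (t + 1)) + t * (t + 1) * d ^ (t + 1) := by
          gcongr; exact Nat.descFactorial_le_pow _ _
      _ = d.descFactorial (t + 2) + (t + 1) * (t + 1) * d ^ (t + 1) := by ring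
      _ ≤ d.descFactorial (t + 2) + (t + 1) * (t + 2) * d ^ (t + 1) := by gcongr; omega

/-- number of injective tuples landing in `D` -/
lemma count_inj (m t : ℕ) (D : Finset (Fin m)) :
    ((univ : Finset (Fin t → Fin m)).filter
        (fun s => Function.Injective s ∧ ∀ j, s j ∈ D)).card = D.card.descFactorial t := by
  classical
  have e : {s : Fin t → Fin m // Function.Injective s ∧ ∀ j, s j ∈ D} ≃
      (Fin t ↪ {v // v ∈ D}) :=
    { toFun := fun s => ⟨fun j => ⟨s.1 j, s.2.2 j⟩,
        fun a b h => s.2.1 (congrArg Subtype.val h)⟩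
      invFun := fun f => ⟨fun j => (f j).1,
        ⟨fun a b h => f.injective (Subtype.ext h), fun j => (f j).2⟩⟩
      left_inv := fun s => by ext j; rfl
      right_inv := fun f => by ext j; rfl }
  calc ((univ : Finset (Fin t → Fin m)).filter
        (fun s => Function.Injective s ∧ ∀ j, s j ∈ D)).card
      = Fintype.card {s : Fin t → Fin m // Function.Injective s ∧ ∀ j, s j ∈ D} := by
        rw [Fintype.card_subtype]
    _ = Fintype.card (Fin t ↪ {v // v ∈ D}) := Fintype.card_congr e
    _ = D.card.descFactorial t := by
        rw [Fintype.card_embedding_eq, Fintype.card_coe, Fintype.card_fin]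

/-- The key counting inequality. -/
lemma key (n t' k' : ℕ) (E : Finset (Fin (k' + 1) → Fin n))
    (hE : ¬ HasGridCopy n (k' + 1) (t' + 1) E) :
    (E.card : ℝ) ^ (t' + 1) ≤
      ((n : ℝ) ^ (k' * t')) *
        ((n : ℝ) ^ (t' + 1) * (exPartite n k' (t' + 1) : ℝ)
          + (t' : ℝ) * ((t' : ℝ) + 1) * (n : ℝ) ^ (k' + t')) := by
  classical
  set t := t' + 1 with htdef
  set x := exPartite n k' t with hxdef
  set D : (Fin k' → Fin n) → Finset (Fin n) :=
    fun e' => univ.filter (fun v => Fin.snoc e' v ∈ E) with hD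
  -- edge count is sum of degrees
  have hm : E.card = ∑ e' : Fin k' → Fin n, (D e').card := by
    rw [Finset.card_eq_sum_card_fiberwise
      (f := fun e => Fin.init e) (t := univ) (fun x _ => mem_univ _)]
    refine Finset.sum_congr rfl fun e' _ => ?_
    refine Finset.card_nbij' (i := fun e => e (Fin.last k')) (j := fun v => Fin.snoc e' v)
      ?_ ?_ ?_ ?_
    · intro e he
      obtain ⟨heE, hinit⟩ := mem_filter.mp he
      simp only [hD, mem_filter, mem_univ, true_and, Finset.mem_coe]
      rw [← hinit, Fin.snoc_init_self]
      exact heE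
    · intro v hv
      simp only [hD, mem_filter, mem_univ, true_and, Finset.mem_coe] at hv
      exact mem_filter.mpr ⟨hv, Fin.init_snoc _ _⟩
    · intro e he
      obtain ⟨-, hinit⟩ := mem_filter.mp he
      show (Fin.snoc e' (e (Fin.last k')) : Fin (k' + 1) → Fin n) = e
      rw [← hinit]
      exact Fin.snoc_init_self e
    · intro v hv
      show (Fin.snoc e' v : Fin (k' + 1) → Fin n) (Fin.last k') = v
      exact Fin.snoc_last _ _
  -- the common-neighborhood hypergraphs
  set Es : (Fin t → Fin n) → Finset (Fin k' → Fin n) :=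
    fun s => univ.filter (fun e' => ∀ j, Fin.snoc e' (s j) ∈ E) with hEs
  set A : Finset (Fin t → Fin n) := univ.filter Function.Injective with hA
  -- no grid copy in a common neighborhood
  have hnc : ∀ s ∈ A, ¬ HasGridCopy n k' t (Es s) := by
    intro s hs hcopy
    obtain ⟨α', hinj, hmem⟩ := hcopy
    have hsinj : Function.Injective s := (mem_filter.mp hs).2
    apply hE
    refine ⟨(Fin.snoc α' s : Fin (k' + 1) → Fin t → Fin n), ?_, ?_⟩
    · intro i
      refine Fin.lastCases ?_ ?_ i
      · simpa using hsinj
      · intro j; simpa using hinj j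
    · intro β
      have h1 : (fun i => (Fin.snoc α' s : Fin (k' + 1) → Fin t → Fin n) i (β i)) =
          Fin.snoc (fun j => α' j (β (Fin.castSucc j))) (s (β (Fin.last k'))) := by
        funext i
        refine Fin.lastCases ?_ ?_ i
        · simp
        · intro j; simp
      rw [h1]
      have h2 := hmem (fun j => β (Fin.castSucc j))
      simp only [hEs, mem_filter, mem_univ, true_and] at h2
      exact h2 (β (Fin.last k'))
  -- double counting
  have hswap : ∑ s ∈ A, (Es s).card = ∑ e' : Fin k' → Fin n, (D e').card.descFactorial t := by
    have h1 : ∀ s, (Es s).card =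
        ∑ e' : Fin k' → Fin n, if (∀ j, Fin.snoc e' (s j) ∈ E) then 1 else 0 := by
      intro s; rw [hEs]; rw [Finset.card_filter]
    simp_rw [h1]
    rw [Finset.sum_comm]
    refine Finset.sum_congr rfl fun e' _ => ?_
    rw [← Finset.card_filter, hA, Finset.filter_filter, ← count_inj n t (D e')]
    congr 1
    refine Finset.filter_congr fun s _ => ?_
    simp only [hD, mem_filter, mem_univ, true_and]
  -- bound the double count
  have hcount : ∑ e' : Fin k' → Fin n, (D e').card.descFactorial t ≤ n ^ t * x := by
    rw [← hswap]
    calc ∑ s ∈ A, (Es s).card ≤ A.card * x := by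
          rw [← smul_eq_mul]
          exact Finset.sum_le_card_nsmul _ _ _ fun s hs => card_le_exPartite (hnc s hs)
      _ ≤ n ^ t * x := by
          apply Nat.mul_le_mul_right
          calc A.card ≤ (univ : Finset (Fin t → Fin n)).card := Finset.card_filter_le _ _
            _ = n ^ t := by simp [Fintype.card_fun]
  -- pointwise degree bound
  have hdle : ∀ e' : Fin k' → Fin n, (D e').card ≤ n := fun e' => by
    calc (D e').card ≤ (univ : Finset (Fin n)).card := Finset.card_filter_le _ _
      _ = n := by simp
  -- sum of t-th powers of degrees
  have hsum : ∑ e' : Fin k' → Fin n, (D e').card ^ t ≤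
      n ^ t * x + t' * t * (n ^ k' * n ^ t') := by
    calc ∑ e' : Fin k' → Fin n, (D e').card ^ t
        ≤ ∑ e' : Fin k' → Fin n, ((D e').card.descFactorial t + t' * t * (D e').card ^ t') := by
          exact Finset.sum_le_sum fun e' _ => pow_le_desc _ t'
      _ = (∑ e' : Fin k' → Fin n, (D e').card.descFactorial t)
            + t' * t * ∑ e' : Fin k' → Fin n, (D e').card ^ t' := by
          rw [Finset.sum_add_distrib, Finset.mul_sum]
      _ ≤ n ^ t * x + t' * t * (n ^ k' * n ^ t') := by
          have h2 : ∑ e' : Fin k' → Fin n, (D e').card ^ t' ≤ n ^ k' * n ^ t' := by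
            calc ∑ e' : Fin k' → Fin n, (D e').card ^ t'
                ≤ ∑ _e' : Fin k' → Fin n, n ^ t' :=
                  Finset.sum_le_sum fun e' _ => Nat.pow_le_pow_left (hdle e') t'
              _ = n ^ k' * n ^ t' := by
                  rw [Finset.sum_const, smul_eq_mul, Finset.card_univ]
                  simp [Fintype.card_fun]
          exact Nat.add_le_add hcount (Nat.mul_le_mul_left _ h2)
  -- power mean
  have hpm : (E.card : ℝ) ^ t ≤
      ((n : ℝ) ^ k') ^ t' * ∑ e' : Fin k' → Fin n, ((D e').card : ℝ) ^ t := by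
    have := pow_sum_le_card_mul_sum_pow
      (s := (univ : Finset (Fin k' → Fin n))) (f := fun e' => ((D e').card : ℝ))
      (fun i _ => by positivity) t'
    rw [hm]
    push_cast
    refine this.trans_eq ?_
    rw [Finset.card_univ]
    simp [Fintype.card_fun, htdef]
  calc (E.card : ℝ) ^ t ≤ ((n : ℝ) ^ k') ^ t' * ∑ e' : Fin k' → Fin n, ((D e').card : ℝ) ^ t :=
        hpm
    _ ≤ ((n : ℝ) ^ k') ^ t' * ((n : ℝ) ^ t * (x : ℝ) + (t' : ℝ) * (t : ℝ) * ((n : ℝ) ^ k' * (n : ℝ) ^ t')) := by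
        gcongr
        have : (∑ e' : Fin k' → Fin n, ((D e').card : ℝ) ^ t)
            = ((∑ e' : Fin k' → Fin n, (D e').card ^ t : ℕ) : ℝ) := by push_cast; ring
        rw [this]
        calc ((∑ e' : Fin k' → Fin n, (D e').card ^ t : ℕ) : ℝ)
            ≤ ((n ^ t * x + t' * t * (n ^ k' * n ^ t') : ℕ) : ℝ) := by exact_mod_cast hsum
          _ = (n : ℝ) ^ t * (x : ℝ) + (t' : ℝ) * (t : ℝ) * ((n : ℝ) ^ k' * (n : ℝ) ^ t') := by
              push_cast; ring
    _ = ((n : ℝ) ^ (k' * t')) * ((n : ℝ) ^ t * (x : ℝ)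
          + (t' : ℝ) * ((t' : ℝ) + 1) * (n : ℝ) ^ (k' + t')) := by
        rw [← pow_mul, pow_add]
        push_cast [htdef]
        ring

/-- Erdős' recursive bound for partite extremal numbers. -/
theorem stmt3 (n k t : ℕ) (hk : 2 ≤ k) (ht : 1 ≤ t) (htn : t ≤ n) :
    (exPartite n k t : ℝ) ≤
      ((exPartite n (k - 1) t : ℝ) + (t : ℝ) * ((t : ℝ) - 1) * (n : ℝ) ^ (k - 2))
          ^ ((1 : ℝ) / t)
        * (n : ℝ) ^ ((k : ℝ) - ((k : ℝ) - 1) / t) := by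
  obtain ⟨k'', rfl⟩ : ∃ k'', k = k'' + 2 := ⟨k - 2, by omega⟩
  obtain ⟨t', rfl⟩ : ∃ t', t = t' + 1 := ⟨t - 1, by omega⟩
  have e1 : k'' + 2 - 1 = k'' + 1 := by omega
  have e2 : k'' + 2 - 2 = k'' := by omega
  rw [e1, e2]
  have hn1 : 1 ≤ n := le_trans ht htn
  set k' := k'' + 1 with hk'def
  set t := t' + 1 with htdef
  obtain ⟨E, hE, hcard⟩ := exPartite_spec n (k' + 1) t ht
  have hkey := key n t' k' E hE
  set x := exPartite n k' t with hxdef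
  set B : ℝ := (x : ℝ) + (t : ℝ) * ((t : ℝ) - 1) * (n : ℝ) ^ k'' with hBdef
  have hBnn : 0 ≤ B := by
    have : ((t : ℝ) - 1) = (t' : ℝ) := by push_cast [htdef]; ring
    rw [hBdef, this]
    positivity
  have hnnn : (0 : ℝ) ≤ n := by positivity
  -- rewrite key as m ^ t ≤ B * n ^ e
  set e : ℕ := k' * t' + t with hedef
  have hkey2 : (E.card : ℝ) ^ t ≤ B * (n : ℝ) ^ e := by
    refine le_trans hkey (le_of_eq ?_)
    have h1 : k' + t' = t + k'' := by omega
    rw [hBdef, hedef, h1, pow_add, pow_add, pow_add]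
    push_cast [htdef]
    ring
  -- take t-th roots
  have ht0 : (0 : ℝ) < t := by positivity
  have hmain : (E.card : ℝ) ≤ B ^ ((1 : ℝ) / t) * ((n : ℝ) ^ e) ^ ((1 : ℝ) / t) := by
    have h1 : (E.card : ℝ) = ((E.card : ℝ) ^ (t : ℕ)) ^ ((1 : ℝ) / (t : ℕ)) := by
      rw [← Real.rpow_natCast ((E.card : ℝ)) t, ← Real.rpow_mul (Nat.cast_nonneg _)]
      rw [mul_one_div, div_self (ne_of_gt ht0), Real.rpow_one]
    rw [h1, ← Real.mul_rpow hBnn (by positivity)]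
    exact Real.rpow_le_rpow (pow_nonneg (Nat.cast_nonneg _) _) hkey2 (by positivity)
  have hexp : ((n : ℝ) ^ e) ^ ((1 : ℝ) / t) =
      (n : ℝ) ^ (((k'' + 2 : ℕ) : ℝ) - (((k'' + 2 : ℕ) : ℝ) - 1) / t) := by
    rw [← Real.rpow_natCast ((n : ℝ)) e, ← Real.rpow_mul hnnn]
    congr 1
    rw [hedef]
    push_cast [htdef, hk'def]
    field_simp
    ring
  calc (exPartite n (k' + 1) t : ℝ) = (E.card : ℝ) := by rw [hcard]
    _ ≤ B ^ ((1 : ℝ) / t) * ((n : ℝ) ^ e) ^ ((1 : ℝ) / t) := hmain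
    _ = B ^ ((1 : ℝ) / t) * (n : ℝ) ^ (((k'' + 2 : ℕ) : ℝ) - (((k'' + 2 : ℕ) : ℝ) - 1) / t) := by
        rw [hexp]
end

section
/- For every $n \in \mathbb{N}$ and every $k, t \in \mathbb{N}_+$ with $k \ge 2$, the partite extremal number satisfies $\mathrm{ex}_{k\text{-part}}(n, K^{(k)}_{t,\ldots,t}) \le 2 k \cdot n^{k - 1/t^{k-1}}$; and for $k = 1$, $\mathrm{ex}_{1\text{-part}}(n, K^{(1)}_t) \le t - 1$. -/
open Finset

/-- The bound in the induction. -/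
noncomputable def bnd (n t k : ℕ) : ℝ :=
  (if k = 1 then (t : ℝ) - 1 else 2 * k) * (n : ℝ) ^ ((k : ℝ) - 1 / (t : ℝ) ^ (k - 1))

lemma bnd_nonneg (n t k : ℕ) (ht : 1 ≤ t) : 0 ≤ bnd n t k := by
  unfold bnd
  apply mul_nonneg
  · split
    · have : (1:ℝ) ≤ t := by exact_mod_cast ht
      linarith
    · positivity
  · exact Real.rpow_nonneg (by positivity) _

/-- Base case: a 1-partite hypergraph with at least `t` vertices has a grid copy. -/
lemma base_copy (n t : ℕ) (E : Finset (Fin 1 → Fin n)) (h : t ≤ E.card) :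
    HasGridCopy n 1 t E := by
  set g : Fin t → {x // x ∈ E} := fun j => E.equivFin.symm (Fin.castLE h j) with hg
  have hginj : Function.Injective g := by
    intro a b hab
    have := E.equivFin.symm.injective hab
    exact Fin.castLE_injective h this
  refine ⟨fun i j => (g j).1 i, ?_, ?_⟩
  · intro i a b hab
    apply hginj
    apply Subtype.ext
    funext i'
    have : i' = i := Subsingleton.elim _ _
    rw [this]; exact hab
  · intro β
    have : (fun i => (g (β i)).1 i) = (g (β 0)).1 := by
      funext i
      have h0 : i = 0 := Subsingleton.elim _ _
      subst h0; rfl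
    rw [this]
    exact (g (β 0)).2

/-- Transfer: if `s` is injective and the common-neighborhood hypergraph of `s`
has a grid copy, then `E` has one. -/
lemma copy_transfer {n m t : ℕ} (E : Finset (Fin (m+1) → Fin n)) (s : Fin t → Fin n)
    (hs : Function.Injective s)
    (h : HasGridCopy n m t (univ.filter fun f => ∀ j, Fin.snoc f (s j) ∈ E)) :
    HasGridCopy n (m+1) t E := by
  obtain ⟨α, hinj, hgrid⟩ := h
  refine ⟨Fin.snoc α s, ?_, ?_⟩
  · intro i
    refine Fin.lastCases ?_ ?_ i
    · rw [Fin.snoc_last]; exact hs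
    · intro j; rw [Fin.snoc_castSucc]; exact hinj j
  · intro β
    have key : (fun i => (Fin.snoc α s : Fin (m+1) → Fin t → Fin n) i (β i)) =
        Fin.snoc (fun i : Fin m => α i (β i.castSucc)) (s (β (Fin.last m))) := by
      funext i
      induction i using Fin.lastCases with
      | last => simp
      | cast j => simp
    rw [key]
    have := hgrid (fun i => β i.castSucc)
    rw [mem_filter] at this
    exact this.2 (β (Fin.last m))

/-- Counting non-injective tuples. -/
lemma noninj_card (n t : ℕ) :
    (univ.filter fun s : Fin t → Fin n => ¬ Function.Injective s).card ≤ t^2 * n^(t-1) := by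
  classical
  set P : Finset (Fin t × Fin t) := univ.filter fun p => p.1 ≠ p.2 with hP
  have hsub : (univ.filter fun s : Fin t → Fin n => ¬ Function.Injective s) ⊆
      P.biUnion (fun p => univ.filter fun s : Fin t → Fin n => s p.1 = s p.2) := by
    intro s hsmem
    rw [mem_filter] at hsmem
    rw [Function.not_injective_iff] at hsmem
    obtain ⟨a, b, hab, hne⟩ := hsmem.2
    rw [mem_biUnion]
    exact ⟨(a, b), by simp [hP, hne], by simp [hab]⟩
  have hcard1 : ∀ p ∈ P, (univ.filter fun s : Fin t → Fin n => s p.1 = s p.2).card ≤ n^(t-1) := by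
    intro p hp
    rw [hP, mem_filter] at hp
    have hne := hp.2
    have : (univ.filter fun s : Fin t → Fin n => s p.1 = s p.2).card ≤
        (univ : Finset ({i : Fin t // i ≠ p.1} → Fin n)).card := by
      apply Finset.card_le_card_of_injOn (fun s => fun i => s i.1)
      · intro s _; exact mem_univ _
      · intro s hsm s' hsm' hres
        rw [mem_coe, mem_filter] at hsm hsm'
        funext i
        by_cases hi : i = p.1
        · subst hi
          have h2 : s p.2 = s' p.2 := congrFun hres ⟨p.2, fun hc => hne hc.symm⟩
          rw [hsm.2, hsm'.2, h2]
        · exact congrFun hres ⟨i, hi⟩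
    rw [card_univ, Fintype.card_fun] at this
    have hcs : Fintype.card {i : Fin t // i ≠ p.1} = t - 1 := by
      have : Fintype.card {i : Fin t // i ≠ p.1} = Fintype.card {i : Fin t // ¬ i = p.1} := rfl
      rw [this, Fintype.card_subtype_compl, Fintype.card_subtype_eq, Fintype.card_fin]
    rw [hcs, Fintype.card_fin] at this
    exact this
  calc (univ.filter fun s : Fin t → Fin n => ¬ Function.Injective s).card
      ≤ (P.biUnion (fun p => univ.filter fun s : Fin t → Fin n => s p.1 = s p.2)).card :=
        card_le_card hsub
    _ ≤ ∑ p ∈ P, (univ.filter fun s : Fin t → Fin n => s p.1 = s p.2).card := card_biUnion_le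
    _ ≤ ∑ _p ∈ P, n^(t-1) := Finset.sum_le_sum hcard1
    _ = P.card * n^(t-1) := by rw [Finset.sum_const, smul_eq_mul]
    _ ≤ t^2 * n^(t-1) := by
        apply Nat.mul_le_mul_right
        calc P.card ≤ (univ : Finset (Fin t × Fin t)).card := card_le_card (filter_subset _ _)
          _ = t^2 := by simp [sq]

lemma nat_ineq1 (t : ℕ) : t + t^2 ≤ 4^t := by
  induction t with
  | zero => simp
  | succ t ih =>
    have h4 : t + 1 ≤ 4^t := by
      calc t + 1 ≤ 2^t := Nat.lt_two_pow_self
        _ ≤ 4^t := Nat.pow_le_pow_left (by norm_num) t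
    ring_nf
    nlinarith [ih, h4]

lemma nat_ineq2 (m t : ℕ) (hm : 1 ≤ m) (ht : 1 ≤ t) : 2*m + t^2 ≤ (2*(m+1))^t := by
  induction t with
  | zero => omega
  | succ t ih =>
    rcases Nat.eq_or_lt_of_le ht with h1 | h2
    · simp [← h1]
    · have ht' : 1 ≤ t := by omega
      have ih' := ih ht'
      have h4 : t + 1 ≤ 4^t := by nlinarith [nat_ineq1 t]
      have hbase : 4 ≤ 2*(m+1) := by omega
      have h4t : 4^t ≤ (2*(m+1))^t := Nat.pow_le_pow_left hbase t
      calc 2*m + (t+1)^2 = (2*m + t^2) + (2*t+1) := by ring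
        _ ≤ (2*(m+1))^t + (2*t+1) := by omega
        _ ≤ (2*(m+1))^t + 3*(2*(m+1))^t := by
            have : 2*t+1 ≤ 3*4^t := by nlinarith
            have : 3*4^t ≤ 3*(2*(m+1))^t := by nlinarith
            omega
        _ ≤ (2*(m+1))^(t+1) := by
            rw [pow_succ]
            have hX : 1 ≤ (2*(m+1))^t := Nat.one_le_pow _ _ (by omega)
            nlinarith

lemma key_bound (n t : ℕ) (ht : 1 ≤ t) (k : ℕ) (hk : 1 ≤ k)
    (E : Finset (Fin k → Fin n)) (hE : ¬ HasGridCopy n k t E) :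
    (E.card : ℝ) ≤ bnd n t k := by
  induction k, hk using Nat.le_induction with
  | base =>
    have hcard : E.card ≤ t - 1 := by
      by_contra hcon
      push_neg at hcon
      exact hE (base_copy n t E (by omega))
    have hb : bnd n t 1 = (t : ℝ) - 1 := by
      simp [bnd]
    rw [hb]
    have h2 := (Nat.cast_le (α := ℝ)).mpr hcard
    rw [Nat.cast_sub ht] at h2
    simpa using h2
  | succ m hm ih =>
    classical
    by_cases hn : n = 0
    · subst hn
      have hEe : E = ∅ := Finset.eq_empty_of_forall_notMem fun x _ => (x 0).elim0
      rw [hEe]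
      simpa using bnd_nonneg 0 t (m+1) ht
    have hn1 : 1 ≤ n := Nat.one_le_iff_ne_zero.mpr hn
    have hN : (1:ℝ) ≤ (n:ℝ) := by exact_mod_cast hn1
    have hNpos : (0:ℝ) < (n:ℝ) := by linarith
    set d : (Fin m → Fin n) → ℕ := fun f => (univ.filter fun v => Fin.snoc f v ∈ E).card with hd
    set F : (Fin t → Fin n) → Finset (Fin m → Fin n) :=
      fun s => univ.filter fun f => ∀ j, Fin.snoc f (s j) ∈ E with hF
    -- step A : card as sum of degrees
    have hA : E.card = ∑ f : Fin m → Fin n, d f := by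
      rw [card_eq_sum_card_fiberwise (f := fun e => Fin.init e) (t := univ)
        (fun x _ => mem_univ _)]
      apply Finset.sum_congr rfl
      intro f _
      apply Finset.card_nbij' (fun e => e (Fin.last m)) (fun v => Fin.snoc f v)
      · intro e he
        rw [mem_coe, mem_filter] at he
        rw [mem_coe, mem_filter]
        refine ⟨mem_univ _, ?_⟩
        rw [← he.2, Fin.snoc_init_self]
        exact he.1
      · intro v hv
        rw [mem_coe, mem_filter] at hv
        rw [mem_coe, mem_filter]
        exact ⟨hv.2, by simp⟩
      · intro e he
        rw [mem_coe, mem_filter] at he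
        rw [← he.2]; exact Fin.snoc_init_self e
      · intro v hv
        exact Fin.snoc_last ..
    -- step B : sum of t-th powers of degrees counts common neighborhoods
    have hB : ∑ f : Fin m → Fin n, (d f)^t = ∑ s : Fin t → Fin n, (F s).card := by
      have h1 : ∀ f : Fin m → Fin n, (d f)^t =
          ∑ s : Fin t → Fin n, if (∀ j, Fin.snoc f (s j) ∈ E) then 1 else 0 := by
        intro f
        rw [← Finset.card_filter]
        have h2 : (univ.filter fun s : Fin t → Fin n => ∀ j, Fin.snoc f (s j) ∈ E) =
            Fintype.piFinset (fun _ : Fin t => univ.filter fun v => Fin.snoc f v ∈ E) := by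
          ext s; simp
        rw [h2, Fintype.card_piFinset]
        simp [hd]
      simp_rw [h1]
      rw [Finset.sum_comm]
      apply Finset.sum_congr rfl
      intro s _
      rw [hF, Finset.card_filter]
    -- step C : power mean inequality
    have hpm : ((E.card : ℝ))^t ≤
        ((n:ℝ)^m)^(t-1) * ∑ f : Fin m → Fin n, ((d f : ℝ))^t := by
      have hj := pow_sum_div_card_le_sum_pow (s := (univ : Finset (Fin m → Fin n)))
        (f := fun f => (d f : ℝ)) (fun i _ => by positivity) (t-1)
      rw [Nat.sub_add_cancel ht] at hj
      have hcu : (((univ : Finset (Fin m → Fin n)).card : ℕ) : ℝ) = (n:ℝ)^m := by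
        rw [card_univ]; simp
      rw [hcu] at hj
      have hsum : (∑ f : Fin m → Fin n, (d f : ℝ)) = (E.card : ℝ) := by
        rw [hA]; push_cast; ring
      rw [hsum] at hj
      have hpow : (0:ℝ) < ((n:ℝ)^m)^(t-1) := by positivity
      calc ((E.card : ℝ))^t = ((E.card : ℝ))^t / ((n:ℝ)^m)^(t-1) * ((n:ℝ)^m)^(t-1) := by
            field_simp
        _ ≤ (∑ f : Fin m → Fin n, ((d f : ℝ))^t) * ((n:ℝ)^m)^(t-1) := by
            apply mul_le_mul_of_nonneg_right hj (le_of_lt hpow)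
        _ = ((n:ℝ)^m)^(t-1) * ∑ f : Fin m → Fin n, ((d f : ℝ))^t := by ring
    -- step D : bound the sum of neighborhood sizes
    have hD : (∑ s : Fin t → Fin n, ((F s).card : ℝ)) ≤
        (n:ℝ)^t * bnd n t m + ((t^2 * n^(t-1) : ℕ) : ℝ) * (n:ℝ)^m := by
      rw [← Finset.sum_filter_add_sum_filter_not univ
        (fun s : Fin t → Fin n => Function.Injective s)]
      have hbnd1 : ∀ s ∈ univ.filter (fun s : Fin t → Fin n => Function.Injective s),
          ((F s).card : ℝ) ≤ bnd n t m := by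
        intro s hs
        rw [mem_filter] at hs
        apply ih
        intro hcopy
        exact hE (copy_transfer E s hs.2 hcopy)
      have h1 : (∑ s ∈ univ.filter (fun s : Fin t → Fin n => Function.Injective s),
          ((F s).card : ℝ)) ≤ (n:ℝ)^t * bnd n t m := by
        calc (∑ s ∈ univ.filter (fun s : Fin t → Fin n => Function.Injective s),
            ((F s).card : ℝ))
            ≤ (univ.filter (fun s : Fin t → Fin n => Function.Injective s)).card • bnd n t m :=
              Finset.sum_le_card_nsmul _ _ _ hbnd1
          _ = ((univ.filter (fun s : Fin t → Fin n => Function.Injective s)).card : ℝ)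
              * bnd n t m := by rw [nsmul_eq_mul]
          _ ≤ (n:ℝ)^t * bnd n t m := by
              apply mul_le_mul_of_nonneg_right _ (bnd_nonneg n t m ht)
              have : (univ.filter (fun s : Fin t → Fin n => Function.Injective s)).card ≤
                  (univ : Finset (Fin t → Fin n)).card := card_le_card (filter_subset _ _)
              rw [card_univ] at this
              simp at this
              calc ((univ.filter (fun s : Fin t → Fin n => Function.Injective s)).card : ℝ)
                  ≤ ((n^t : ℕ) : ℝ) := by exact_mod_cast this
                _ = (n:ℝ)^t := by push_cast; ring
      have h2 : (∑ s ∈ univ.filter (fun s : Fin t → Fin n => ¬ Function.Injective s),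
          ((F s).card : ℝ)) ≤ ((t^2 * n^(t-1) : ℕ) : ℝ) * (n:ℝ)^m := by
        have hbnd2 : ∀ s ∈ univ.filter (fun s : Fin t → Fin n => ¬ Function.Injective s),
            ((F s).card : ℝ) ≤ (n:ℝ)^m := by
          intro s _
          have : (F s).card ≤ (univ : Finset (Fin m → Fin n)).card :=
            card_le_card (filter_subset _ _)
          rw [card_univ] at this
          simp at this
          calc ((F s).card : ℝ) ≤ ((n^m : ℕ) : ℝ) := by exact_mod_cast this
            _ = (n:ℝ)^m := by push_cast; ring
        calc (∑ s ∈ univ.filter (fun s : Fin t → Fin n => ¬ Function.Injective s),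
            ((F s).card : ℝ))
            ≤ (univ.filter (fun s : Fin t → Fin n => ¬ Function.Injective s)).card • ((n:ℝ)^m) :=
              Finset.sum_le_card_nsmul _ _ _ hbnd2
          _ = ((univ.filter (fun s : Fin t → Fin n => ¬ Function.Injective s)).card : ℝ)
              * (n:ℝ)^m := by rw [nsmul_eq_mul]
          _ ≤ ((t^2 * n^(t-1) : ℕ) : ℝ) * (n:ℝ)^m := by
              apply mul_le_mul_of_nonneg_right _ (by positivity)
              exact_mod_cast noninj_card n t
      linarith
    -- combine
    have hcastB : (∑ f : Fin m → Fin n, ((d f : ℝ))^t) = ∑ s : Fin t → Fin n, ((F s).card : ℝ) := by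
      exact_mod_cast hB
    have hcomb : ((E.card : ℝ))^t ≤
        ((n:ℝ)^m)^(t-1) * ((n:ℝ)^t * bnd n t m + ((t^2 * n^(t-1) : ℕ) : ℝ) * (n:ℝ)^m) := by
      refine le_trans hpm ?_
      apply mul_le_mul_of_nonneg_left _ (by positivity)
      rw [hcastB]
      exact hD
    -- final algebra
    have htR : (1:ℝ) ≤ (t:ℝ) := by exact_mod_cast ht
    have htpos : (0:ℝ) < (t:ℝ) := by linarith
    have htpow1 : (1:ℝ) ≤ (t:ℝ)^(m-1) := one_le_pow₀ htR
    have hNnn : (0:ℝ) ≤ (n:ℝ) := le_of_lt hNpos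
    set a : ℝ := if m = 1 then (t : ℝ) - 1 else 2 * m with ha
    have ha0 : 0 ≤ a := by
      rw [ha]; split
      · linarith
      · positivity
    set em : ℝ := (m:ℝ) - 1 / (t:ℝ)^(m-1) with hem
    have hbm : bnd n t m = a * (n:ℝ) ^ em := rfl
    set e : ℝ := ((m:ℝ)+1)*(t:ℝ) - 1/(t:ℝ)^(m-1) with he
    have hc1 : (((m*(t-1)+t : ℕ)):ℝ) + em = e := by
      rw [hem, he]
      push_cast [Nat.cast_sub ht]
      ring
    have hterm1 : ((n:ℝ)^m)^(t-1) * ((n:ℝ)^t * (a * (n:ℝ) ^ em)) = a * (n:ℝ) ^ e := by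
      rw [show ((n:ℝ)^m)^(t-1) * ((n:ℝ)^t * (a * (n:ℝ) ^ em)) =
          a * ((n:ℝ)^(m*(t-1)) * (n:ℝ)^t * (n:ℝ) ^ em) from by rw [← pow_mul]; ring,
        ← pow_add, ← Real.rpow_natCast (n:ℝ) (m*(t-1)+t), ← Real.rpow_add hNpos, hc1]
    have hterm2 : ((n:ℝ)^m)^(t-1) * (((t^2 * n^(t-1) : ℕ) : ℝ) * (n:ℝ)^m) ≤
        (t:ℝ)^2 * (n:ℝ) ^ e := by
      have hcast : ((t^2 * n^(t-1) : ℕ) : ℝ) = (t:ℝ)^2 * (n:ℝ)^(t-1) := by push_cast; ring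
      rw [hcast]
      have hre : ((n:ℝ)^m)^(t-1) * ((t:ℝ)^2 * (n:ℝ)^(t-1) * (n:ℝ)^m) =
          (t:ℝ)^2 * (n:ℝ)^(m*(t-1) + (t-1) + m) := by
        rw [← pow_mul, pow_add, pow_add]; ring
      rw [hre]
      apply mul_le_mul_of_nonneg_left _ (by positivity)
      rw [← Real.rpow_natCast (n:ℝ) (m*(t-1)+(t-1)+m)]
      apply Real.rpow_le_rpow_of_exponent_le hN
      rw [he]
      push_cast [Nat.cast_sub ht]
      have hle1 : 1/(t:ℝ)^(m-1) ≤ 1 := by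
        rw [div_le_one (by positivity)]; exact htpow1
      nlinarith [hle1]
    have hcoef : a + (t:ℝ)^2 ≤ (2*((m:ℝ)+1))^t := by
      by_cases hm1 : m = 1
      · subst hm1
        rw [ha, if_pos rfl]
        have h1R : (t:ℝ) + (t:ℝ)^2 ≤ (4:ℝ)^t := by exact_mod_cast nat_ineq1 t
        norm_num
        linarith
      · rw [ha, if_neg hm1]
        have h2R : 2*(m:ℝ) + (t:ℝ)^2 ≤ (2*((m:ℝ)+1))^t := by
          exact_mod_cast nat_ineq2 m t hm ht
        linarith
    have hb2 : (bnd n t (m+1))^t = (2*((m:ℝ)+1))^t * (n:ℝ) ^ e := by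
      have hb1 : bnd n t (m+1) = 2*((m:ℝ)+1) * (n:ℝ) ^ (((m:ℝ)+1) - 1/(t:ℝ)^m) := by
        rw [bnd, if_neg (by omega)]
        push_cast
        norm_num
      rw [hb1, mul_pow]
      congr 1
      rw [← Real.rpow_natCast ((n:ℝ) ^ (((m:ℝ)+1) - 1/(t:ℝ)^m)) t, ← Real.rpow_mul hNnn]
      congr 1
      have htm : (t:ℝ)^m = (t:ℝ)^(m-1) * t := by
        conv_lhs => rw [show m = (m-1)+1 from by omega]
        rw [pow_succ]
      rw [he, htm]
      field_simp
    have hfin : ((E.card : ℝ))^t ≤ (bnd n t (m+1))^t := by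
      rw [hb2]
      calc ((E.card : ℝ))^t ≤ ((n:ℝ)^m)^(t-1) * ((n:ℝ)^t * bnd n t m
            + ((t^2 * n^(t-1) : ℕ) : ℝ) * (n:ℝ)^m) := hcomb
        _ = ((n:ℝ)^m)^(t-1) * ((n:ℝ)^t * (a * (n:ℝ)^em))
            + ((n:ℝ)^m)^(t-1) * (((t^2 * n^(t-1) : ℕ) : ℝ) * (n:ℝ)^m) := by rw [hbm]; ring
        _ ≤ a * (n:ℝ)^e + (t:ℝ)^2 * (n:ℝ)^e := by
            rw [hterm1]; linarith [hterm2]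
        _ = (a + (t:ℝ)^2) * (n:ℝ)^e := by ring
        _ ≤ (2*((m:ℝ)+1))^t * (n:ℝ)^e :=
            mul_le_mul_of_nonneg_right hcoef (Real.rpow_nonneg hNnn _)
    exact le_of_pow_le_pow_left₀ (by omega) (bnd_nonneg n t (m+1) ht) hfin

/-- Kővári–Sós–Turán / Erdős bound for partite extremal numbers. -/
theorem stmt4 (n k t : ℕ) (hk : 1 ≤ k) (ht : 1 ≤ t) :
    (2 ≤ k → (exPartite n k t : ℝ) ≤
      2 * (k : ℝ) * (n : ℝ) ^ ((k : ℝ) - 1 / (t : ℝ) ^ (k - 1))) ∧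
    (k = 1 → exPartite n k t ≤ t - 1) := by
  have hmem : exPartite n k t ∈
      {c | ∃ E : Finset (Fin k → Fin n), ¬ HasGridCopy n k t E ∧ c = E.card} := by
    apply Nat.sSup_mem
    · refine ⟨0, ∅, ?_, by simp⟩
      rintro ⟨α, hinj, hgrid⟩
      have hne : Nonempty (Fin t) := ⟨⟨0, by omega⟩⟩
      exact absurd (hgrid (fun _ => Classical.arbitrary _)) (by simp)
    · refine ⟨n^k, ?_⟩
      rintro c ⟨E, _, rfl⟩
      calc E.card ≤ (univ : Finset (Fin k → Fin n)).card := card_le_card (subset_univ _)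
        _ = n^k := by rw [card_univ]; simp
  obtain ⟨E, hnE, hEc⟩ := hmem
  have hb := key_bound n t ht k hk E hnE
  rw [← hEc] at hb
  constructor
  · intro hk2
    refine le_trans hb (le_of_eq ?_)
    unfold bnd
    rw [if_neg (by omega)]
  · intro hk1
    subst hk1
    have hb1 : bnd n t 1 = (t:ℝ) - 1 := by simp [bnd]
    rw [hb1] at hb
    have h2 : (exPartite n 1 t : ℝ) ≤ ((t - 1 : ℕ) : ℝ) := by
      rw [Nat.cast_sub ht]; push_cast; linarith
    exact_mod_cast h2
end

section
/- If $a \ge 1/2$, $b \ge 0$, and $x \ge \frac{2e}{e-1} \cdot a \ln(2a) + 2b$, then $x \ge a \ln x + b$. -/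
/-- For `t > 0`, `log t ≤ t / e`. -/
lemma log_le_div_e {t : ℝ} (ht : 0 < t) : Real.log t ≤ t / Real.exp 1 := by
  have h := Real.log_le_sub_one_of_pos (x := t / Real.exp 1)
    (div_pos ht (Real.exp_pos 1))
  rw [Real.log_div (ne_of_gt ht) (ne_of_gt (Real.exp_pos 1)), Real.log_exp] at h
  linarith

/-- If `x ≥ (2e/(e-1)) a ln(2a) + 2b` with `a ≥ 1/2`, `b ≥ 0`, then `x ≥ a ln x + b`. -/
theorem stmt8 (a b x : ℝ) (ha : 1 / 2 ≤ a) (hb : 0 ≤ b)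
    (hx : 2 * Real.exp 1 / (Real.exp 1 - 1) * (a * Real.log (2 * a)) + 2 * b ≤ x) :
    a * Real.log x + b ≤ x := by
  have hE : (1:ℝ) < Real.exp 1 := by
    have := Real.exp_one_gt_d9; linarith
  have hE0 : (0:ℝ) < Real.exp 1 := by linarith
  have hE1 : (0:ℝ) < Real.exp 1 - 1 := by linarith
  have h2a : (1:ℝ) ≤ 2 * a := by linarith
  have hL : 0 ≤ Real.log (2 * a) := Real.log_nonneg h2a
  have ha0 : (0:ℝ) < a := by linarith
  have hT : 0 ≤ 2 * Real.exp 1 / (Real.exp 1 - 1) * (a * Real.log (2 * a)) := by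
    have : 0 ≤ 2 * Real.exp 1 / (Real.exp 1 - 1) := by positivity
    positivity
  have hx0 : (0:ℝ) ≤ x := by linarith
  rcases le_or_gt x 1 with hx1 | hx1
  · have : Real.log x ≤ 0 := Real.log_nonpos hx0 hx1
    nlinarith
  · have hxpos : (0:ℝ) < x := by linarith
    have hdiv : Real.log (x / (2 * a)) ≤ x / (2 * a) / Real.exp 1 :=
      log_le_div_e (div_pos hxpos (by linarith))
    have hsplit : Real.log x = Real.log (2 * a) + Real.log (x / (2 * a)) := by
      rw [Real.log_div (ne_of_gt hxpos) (by linarith)]; ring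
    have hlog : Real.log x ≤ Real.log (2 * a) + x / (2 * a) / Real.exp 1 := by
      rw [hsplit]; linarith
    have h2 : a * (x / (2 * a) / Real.exp 1) = x / (2 * Real.exp 1) := by
      field_simp
    have key : a * Real.log x ≤ a * Real.log (2 * a) + x / (2 * Real.exp 1) := by
      have h3 := mul_le_mul_of_nonneg_left hlog (le_of_lt ha0)
      rw [mul_add, h2] at h3
      exact h3
    set L := a * Real.log (2 * a) with hLdef
    have hLnn : 0 ≤ L := by positivity
    have hxineq' : 2 * Real.exp 1 * L + 2 * b * (Real.exp 1 - 1) ≤ x * (Real.exp 1 - 1) := by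
      have h4 := mul_le_mul_of_nonneg_right hx (le_of_lt hE1)
      calc 2 * Real.exp 1 * L + 2 * b * (Real.exp 1 - 1)
          = (2 * Real.exp 1 / (Real.exp 1 - 1) * L + 2 * b) * (Real.exp 1 - 1) := by
            field_simp
        _ ≤ x * (Real.exp 1 - 1) := h4
    have hxd : x / (2 * Real.exp 1) * (2 * Real.exp 1) = x :=
      div_mul_cancel₀ x (by positivity)
    have hgoal : L + x / (2 * Real.exp 1) + b ≤ x := by
      nlinarith [hxineq', hxd, hLnn, hb, hE1.le, hE0.le,
        mul_nonneg hLnn hE1.le, mul_nonneg hb hE1.le]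
    linarith [key]
end

section
/- Let $a, b, c, d \ge 0$ be reals, $t > 0$ real, $k \in \mathbb{N}_+$, and $x \in \mathbb{R}$ satisfy: $t \le k$, $\frac{a k}{t} \ge \frac{1}{4}$, $b \ge 1$, and $x \ge \left(\frac{e}{e-1} \cdot \frac{4 a k}{t} \ln\left(\frac{4 a k}{t}\right) + 4 a c + b\right)^{1/t} + (2d)^{1/k}$. Then $x^k \ge a \cdot x^{k-t} \cdot (\ln(x^k + b) + c) + d$. -/
/-- Inversion lemma for sample-complexity bounds. -/
theorem stmt9 (a b c d t x : ℝ) (k : ℕ) (hk : 1 ≤ k)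
    (ha : 0 ≤ a) (hb : 1 ≤ b) (hc : 0 ≤ c) (hd : 0 ≤ d)
    (ht : 0 < t) (htk : t ≤ (k : ℝ)) (hak : 1 / 4 ≤ a * k / t)
    (hx : (Real.exp 1 / (Real.exp 1 - 1) * (4 * a * k / t) * Real.log (4 * a * k / t)
        + 4 * a * c + b) ^ (1 / t) + (2 * d) ^ (1 / (k : ℝ)) ≤ x) :
    a * x ^ ((k : ℝ) - t) * (Real.log (x ^ (k : ℝ) + b) + c) + d ≤ x ^ (k : ℝ) := by
  have he1 : (2:ℝ) < Real.exp 1 := by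
    have := Real.exp_one_gt_d9; linarith
  have he0 : (0:ℝ) < Real.exp 1 := by linarith
  have hk1 : (1:ℝ) ≤ (k:ℝ) := by exact_mod_cast hk
  set s : ℝ := 4 * a * k / t with hs_def
  clear_value s
  have hs1 : 1 ≤ s := by
    have h4 : s = 4 * (a * ↑k / t) := by rw [hs_def]; ring
    linarith [h4]
  have hs0 : (0:ℝ) < s := by linarith
  have hlns : 0 ≤ Real.log s := Real.log_nonneg hs1
  set c0 : ℝ := Real.exp 1 / (Real.exp 1 - 1) with hc0_def
  clear_value c0
  have hc0pos : 0 < c0 := by rw [hc0_def]; exact div_pos (by linarith) (by linarith)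
  have hc0le2 : c0 ≤ 2 := by
    rw [hc0_def, div_le_iff₀ (by linarith)]; linarith
  set A : ℝ := c0 * s * Real.log s + 4 * a * c + b with hA_def
  clear_value A
  have hcsl : 0 ≤ c0 * s * Real.log s := by positivity
  have hac : 0 ≤ a * c := mul_nonneg ha hc
  have hA1 : 1 ≤ A := by rw [hA_def]; nlinarith
  have hA0 : (0:ℝ) < A := by linarith
  have hxA : A ^ (1 / t) ≤ x := by
    have h0 : (0:ℝ) ≤ (2 * d) ^ (1 / (k:ℝ)) := Real.rpow_nonneg (by linarith) _
    linarith
  have hx1 : 1 ≤ x := by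
    have : (1:ℝ) ≤ A ^ (1/t) := Real.one_le_rpow hA1 (by positivity)
    linarith
  have hx0 : (0:ℝ) < x := by linarith
  -- x^t ≥ A
  have hyA : A ≤ x ^ t := by
    calc A = (A ^ (1/t)) ^ t := by
            rw [← Real.rpow_mul hA0.le, one_div_mul_cancel ht.ne', Real.rpow_one]
    _ ≤ x ^ t := Real.rpow_le_rpow (Real.rpow_nonneg hA0.le _) hxA ht.le
  -- x^k ≥ 2d
  have hxd : 2 * d ≤ x ^ (k:ℝ) := by
    have h2d : (2*d) ^ (1/(k:ℝ)) ≤ x := by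
      have h0 : (0:ℝ) ≤ A ^ (1 / t) := Real.rpow_nonneg hA0.le _
      linarith
    calc 2*d = ((2*d) ^ (1/(k:ℝ))) ^ (k:ℝ) := by
            rw [← Real.rpow_mul (by linarith), one_div_mul_cancel
              (by positivity : ((k:ℝ)) ≠ 0), Real.rpow_one]
    _ ≤ x ^ (k:ℝ) := Real.rpow_le_rpow (Real.rpow_nonneg (by linarith) _) h2d (by positivity)
  have hxt1 : 1 ≤ x ^ t := by linarith
  have hxk_ge_xt : x ^ t ≤ x ^ (k:ℝ) := Real.rpow_le_rpow_of_exponent_le hx1 htk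
  have hxk1 : 1 ≤ x ^ (k:ℝ) := by linarith
  have hxkb : b ≤ x ^ (k:ℝ) := by
    have hbA : b ≤ A := by rw [hA_def]; nlinarith
    linarith
  -- log bound
  have hlogx : 0 ≤ Real.log x := Real.log_nonneg hx1
  have hlog1 : Real.log (x ^ (k:ℝ) + b) ≤ Real.log 2 + (k:ℝ) * Real.log x := by
    calc Real.log (x ^ (k:ℝ) + b) ≤ Real.log (2 * x ^ (k:ℝ)) := by
          apply Real.log_le_log (by linarith)
          linarith
    _ = Real.log 2 + (k:ℝ) * Real.log x := by
          rw [Real.log_mul (by norm_num) (by positivity), Real.log_rpow hx0]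
  have hlog2 : Real.log (x ^ (k:ℝ) + b) ≤ (k/t) * Real.log (2 * x ^ t) := by
    have hkt : 1 ≤ (k:ℝ)/t := (le_div_iff₀ ht).mpr (by linarith)
    have hlog2' : Real.log (2 * x ^ t) = Real.log 2 + t * Real.log x := by
      rw [Real.log_mul (by norm_num) (by positivity), Real.log_rpow hx0]
    have hl2 : (0:ℝ) ≤ Real.log 2 := Real.log_nonneg (by norm_num)
    calc Real.log (x ^ (k:ℝ) + b) ≤ Real.log 2 + (k:ℝ) * Real.log x := hlog1
    _ ≤ (k/t) * (Real.log 2 + t * Real.log x) := by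
        have h1 : Real.log 2 ≤ (k/t) * Real.log 2 := le_mul_of_one_le_left hl2 hkt
        have h3 : ((k:ℝ)/t) * (Real.log 2 + t * Real.log x)
            = ((k:ℝ)/t) * Real.log 2 + (k:ℝ) * Real.log x := by
          field_simp
        linarith [h3]
    _ = (k/t) * Real.log (2 * x ^ t) := by rw [hlog2']
  -- key inequality: s * log(2 x^t) + 4 a c ≤ 2 x^t
  have hkey : s * Real.log (2 * x ^ t) + 4 * (a * c) ≤ 2 * x ^ t := by
    set z : ℝ := 2 * x ^ t with hz_def
    clear_value z
    have hzA : 2 * A ≤ z := by rw [hz_def]; linarith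
    have hz0 : 0 < z := by rw [hz_def]; positivity
    have hlz : Real.log z ≤ z / (Real.exp 1 * s) + Real.log s := by
      have hzs : 0 < z / s := by positivity
      have h1 : Real.log (z / s) ≤ z / s / Real.exp 1 := by
        have h := Real.log_le_sub_one_of_pos (show 0 < z / s / Real.exp 1 by positivity)
        rw [Real.log_div hzs.ne' (Real.exp_pos 1).ne', Real.log_exp] at h
        linarith
      rw [Real.log_div hz0.ne' hs0.ne'] at h1
      have h3 : z / s / Real.exp 1 = z / (Real.exp 1 * s) := by
        rw [div_div, mul_comm]
      rw [h3] at h1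
      linarith
    have h4 : s * Real.log z ≤ z / Real.exp 1 + s * Real.log s := by
      have h := mul_le_mul_of_nonneg_left hlz hs0.le
      have heq : s * (z / (Real.exp 1 * s) + Real.log s)
          = z / Real.exp 1 + s * Real.log s := by
        field_simp
      rw [heq] at h
      exact h
    have h5 : c0 * (s * Real.log s + 4 * (a * c)) ≤ z := by
      have h5' : c0 * (s * Real.log s + 4 * (a * c)) ≤ 2 * A := by
        rw [hA_def]
        linarith [mul_nonneg (sub_nonneg.mpr hc0le2) hac, hcsl, hac]
      linarith
    have h6 : Real.exp 1 * (s * Real.log s + 4 * (a * c)) ≤ z * (Real.exp 1 - 1) := by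
      have h := mul_le_mul_of_nonneg_right h5 (by linarith : (0:ℝ) ≤ Real.exp 1 - 1)
      rw [hc0_def] at h
      have heq : Real.exp 1 / (Real.exp 1 - 1) * (s * Real.log s + 4 * (a * c)) *
          (Real.exp 1 - 1) = Real.exp 1 * (s * Real.log s + 4 * (a * c)) := by
        field_simp
        exact mul_div_cancel_left₀ _ (ne_of_gt (by linarith : (0:ℝ) < Real.exp 1 - 1))
      rw [heq] at h
      exact h
    have h7 : z / Real.exp 1 + (s * Real.log s + 4 * (a * c)) ≤ z := by
      rw [div_add' _ _ _ he0.ne', div_le_iff₀ he0]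
      linarith [h6]
    linarith
  -- conclude: a * (log(x^k+b)+c) ≤ x^t / 2
  have hmain : a * (Real.log (x ^ (k:ℝ) + b) + c) ≤ x ^ t / 2 := by
    have h1 : a * (Real.log (x ^ (k:ℝ) + b) + c) ≤ a * ((k/t) * Real.log (2 * x ^ t) + c) := by
      apply mul_le_mul_of_nonneg_left _ ha
      linarith
    have h2 : a * (((k:ℝ)/t) * Real.log (2 * x ^ t) + c)
        = (s/4) * Real.log (2 * x ^ t) + a * c := by
      rw [hs_def]; field_simp
    rw [h2] at h1
    linarith
  -- x^(k-t) * x^t = x^k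
  have hpow : x ^ ((k:ℝ) - t) * x ^ t = x ^ (k:ℝ) := by
    rw [← Real.rpow_add hx0]; ring_nf
  have hxt0 : 0 < x ^ ((k:ℝ) - t) := Real.rpow_pos_of_pos hx0 _
  have hfinal : a * x ^ ((k:ℝ) - t) * (Real.log (x ^ (k:ℝ) + b) + c) ≤ x ^ (k:ℝ) / 2 := by
    calc a * x ^ ((k:ℝ) - t) * (Real.log (x ^ (k:ℝ) + b) + c)
        = x ^ ((k:ℝ) - t) * (a * (Real.log (x ^ (k:ℝ) + b) + c)) := by ring
    _ ≤ x ^ ((k:ℝ) - t) * (x ^ t / 2) := mul_le_mul_of_nonneg_left hmain hxt0.le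
    _ = x ^ (k:ℝ) / 2 := by rw [← hpow]; ring
  linarith
end
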